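/- arXiv:1909.07823 — 5 statements merged into one kernel-verified Lean document; each statement's English description precedes it below -/
import Mathlib

section
/- For all positive integers n and k, T_k(n) = Σ_{i=1}^{n} k^{ω(i)}. -/
open Finset

namespace CountAux

/-- Pairwise coprime tuples with product exactly `m`. -/
def cop (k m : ℕ) : Finset (Fin k → ℕ) :=
  (Nat.finMulAntidiag k m).filter fun a => ∀ i j, i ≠ j → Nat.Coprime (a i) (a j)

lemma mem_cop {k m : ℕ} {a : Fin k → ℕ} :
    a ∈ cop k m ↔ (∏ i, a i = m ∧ m ≠ 0) ∧ ∀ i j, i ≠ j → Nat.Coprime (a i) (a j) := by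
  simp [cop, Nat.mem_finMulAntidiag]

noncomputable def B (k m : ℕ) : (∀ p ∈ m.primeFactors, Fin k) → Fin k → ℕ :=
  fun f i => ∏ p ∈ {p ∈ m.primeFactors.attach | f p.1 p.2 = i}, p.1 ^ m.factorization p.1

lemma dvd_B_iff {k m : ℕ} {p : ℕ} (hp : p ∈ m.primeFactors)
    (f : ∀ p ∈ m.primeFactors, Fin k) (i : Fin k) :
    p ∣ B k m f i ↔ f p hp = i := by
  obtain ⟨hpp, hpd, hm⟩ := Nat.mem_primeFactors.mp hp
  constructor
  · intro h
    rw [B, Prime.dvd_finset_prod_iff hpp.prime] at h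
    obtain ⟨q, hq, hdvd⟩ := h
    obtain ⟨hq1, hq2⟩ := mem_filter.mp hq
    have hqp : Nat.Prime q.1 := Nat.prime_of_mem_primeFactors q.2
    have : p = q.1 := (Nat.prime_dvd_prime_iff_eq hpp hqp).mp (hpp.dvd_of_dvd_pow hdvd)
    subst this
    exact hq2
  · intro h
    have hmem : (⟨p, hp⟩ : {x // x ∈ m.primeFactors}) ∈
        {p ∈ m.primeFactors.attach | f p.1 p.2 = i} := by
      simp [h]
    refine dvd_trans ?_ (Finset.dvd_prod_of_mem _ hmem)
    exact dvd_pow_self p (Nat.Prime.factorization_pos_of_dvd hpp hm hpd).ne'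

lemma B_mem {k m : ℕ} (hm : m ≠ 0) (f : ∀ p ∈ m.primeFactors, Fin k) :
    B k m f ∈ cop k m := by
  rw [mem_cop]
  refine ⟨⟨?_, hm⟩, ?_⟩
  · unfold B
    rw [Finset.prod_fiberwise_of_maps_to (fun _ _ => mem_univ _),
      prod_attach (f := fun p => p ^ m.factorization p),
      ← Nat.prod_factorization_eq_prod_primeFactors]
    exact Nat.factorization_prod_pow_eq_self hm
  · intro i j hij
    unfold B
    apply Nat.Coprime.prod_left
    intro p hp
    apply Nat.Coprime.prod_right
    intro q hq
    have hpne : p.1 ≠ q.1 := by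
      rintro h
      have : p = q := Subtype.ext h
      subst this
      exact hij ((mem_filter.mp hp).2.symm.trans (mem_filter.mp hq).2)
    exact Nat.Coprime.pow _ _ <| (Nat.coprime_primes (Nat.prime_of_mem_primeFactors p.2)
      (Nat.prime_of_mem_primeFactors q.2)).mpr hpne

lemma exists_unique_dvd {k m p : ℕ} {a : Fin k → ℕ} (ha : a ∈ cop k m)
    (hp : p ∈ m.primeFactors) : ∃! i, p ∣ a i := by
  obtain ⟨⟨hprod, hm⟩, hcop⟩ := mem_cop.mp ha
  obtain ⟨hpp, hpd, -⟩ := Nat.mem_primeFactors.mp hp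
  rw [← hprod, Prime.dvd_finset_prod_iff hpp.prime] at hpd
  obtain ⟨i, -, hi⟩ := hpd
  refine ⟨i, hi, fun j hj => ?_⟩
  by_contra hij
  exact Nat.Prime.not_coprime_iff_dvd.mpr ⟨p, hpp, hj, hi⟩ (hcop j i hij)

lemma surj_aux {k m : ℕ} {a : Fin k → ℕ} (ha : a ∈ cop k m) (i : Fin k) :
    a i = ∏ p ∈ {p ∈ m.primeFactors | p ∣ a i}, p ^ m.factorization p := by
  obtain ⟨⟨hprod, hm⟩, hcop⟩ := mem_cop.mp ha
  have hane : ∀ j, a j ≠ 0 := fun j h => hm (by rw [← hprod]; exact prod_eq_zero (mem_univ j) h)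
  have hdvd : a i ∣ m := hprod ▸ dvd_prod_of_mem a (mem_univ i)
  have hpf : (a i).primeFactors = {p ∈ m.primeFactors | p ∣ a i} := by
    ext p
    simp only [Nat.mem_primeFactors, mem_filter]
    constructor
    · rintro ⟨h1, h2, -⟩
      exact ⟨⟨h1, h2.trans hdvd, hm⟩, h2⟩
    · rintro ⟨⟨h1, -, -⟩, h2⟩
      exact ⟨h1, h2, hane i⟩
  have hfac : ∀ p, p ∣ a i → p.Prime → (a i).factorization p = m.factorization p := by
    intro p hpd hpp
    have hrest : ¬ p ∣ ∏ j ∈ univ.erase i, a j := by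
      intro h
      rw [Prime.dvd_finset_prod_iff hpp.prime] at h
      obtain ⟨j, hj, hja⟩ := h
      have hji : j ≠ i := (mem_erase.mp hj).1
      exact Nat.Prime.not_coprime_iff_dvd.mpr ⟨p, hpp, hja, hpd⟩ (hcop j i hji)
    have hmm : m = a i * ∏ j ∈ univ.erase i, a j := by
      rw [← hprod, Finset.mul_prod_erase _ _ (mem_univ i)]
    rw [hmm, Nat.factorization_mul (hane i) (prod_ne_zero_iff.mpr fun j _ => hane j),
      Finsupp.add_apply, Nat.factorization_eq_zero_of_not_dvd hrest, add_zero]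
  conv_lhs => rw [← Nat.factorization_prod_pow_eq_self (hane i),
    Nat.prod_factorization_eq_prod_primeFactors, hpf]
  apply Finset.prod_congr rfl
  intro p hp
  obtain ⟨hp1, hp2⟩ := mem_filter.mp hp
  rw [hfac p hp2 (Nat.prime_of_mem_primeFactors hp1)]

lemma card_cop {k m : ℕ} (hm : m ≠ 0) : (cop k m).card = k ^ m.primeFactors.card := by
  have := Finset.card_bij (fun f (_ : f ∈ (m.primeFactors.pi fun _ => (univ : Finset (Fin k))))
      => B k m f)
    (fun f _ => B_mem hm f)
    (fun f hf g hg heq => by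
      have heq' : B k m f = B k m g := heq
      funext p hp
      have h1 : p ∣ B k m f (f p hp) := (dvd_B_iff hp f _).mpr rfl
      rw [heq'] at h1
      exact ((dvd_B_iff hp g _).mp h1).symm)
    (fun a ha => by
      choose f hf hfu using fun p (hp : p ∈ m.primeFactors) => exists_unique_dvd ha hp
      refine ⟨f, by simp [Finset.mem_pi], ?_⟩
      funext i
      show B k m f i = a i
      have hiff : ∀ (p : {x // x ∈ m.primeFactors}), f p.1 p.2 = i ↔ p.1 ∣ a i := by
        rintro ⟨p, hp⟩
        constructor
        · rintro rfl; exact hf p hp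
        · intro h; exact (hfu p hp i h).symm
      have hfilter : {p ∈ m.primeFactors.attach | f p.1 p.2 = i}
          = {p ∈ m.primeFactors.attach | p.1 ∣ a i} := by
        ext p; simp only [mem_filter, hiff p]
      rw [surj_aux ha i]
      unfold B
      rw [hfilter, Finset.prod_filter, prod_attach
        (f := fun p => if p ∣ a i then p ^ m.factorization p else 1), ← Finset.prod_filter])
  rw [← this, Finset.card_pi, Finset.prod_const, Finset.card_fin]

end CountAux

/-- For all positive integers `n` and `k`,
`T_k(n) = Σ_{i=1}^{n} k ^ ω(i)`, where `T_k(n)` is the number of ordered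
`k`-tuples `(a 1, …, a k)` of positive integers `≤ n` that are pairwise
relatively prime and whose product is at most `n`. -/
theorem count_pairwise_coprime_tuples_prod_le (n k : ℕ) (hn : 0 < n) (hk : 0 < k) :
    ((Fintype.piFinset fun _ : Fin k => Finset.Icc 1 n).filter
        (fun a => (∀ i j, i ≠ j → Nat.Coprime (a i) (a j)) ∧ ∏ i, a i ≤ n)).card
      = ∑ i ∈ Finset.Icc 1 n, k ^ i.primeFactors.card := by
  have hset : ((Fintype.piFinset fun _ : Fin k => Finset.Icc 1 n).filter
        (fun a => (∀ i j, i ≠ j → Nat.Coprime (a i) (a j)) ∧ ∏ i, a i ≤ n))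
      = (Finset.Icc 1 n).biUnion (fun m => CountAux.cop k m) := by
    ext a
    simp only [Finset.mem_filter, Fintype.mem_piFinset, Finset.mem_Icc, Finset.mem_biUnion,
      CountAux.mem_cop]
    constructor
    · rintro ⟨hbd, hcop, hle⟩
      refine ⟨∏ i, a i, ⟨?_, hle⟩, ⟨rfl, ?_⟩, hcop⟩
      · exact Finset.one_le_prod' fun i _ => (hbd i).1
      · exact Nat.one_le_iff_ne_zero.mp (Finset.one_le_prod' fun i _ => (hbd i).1)
    · rintro ⟨m, ⟨hm1, hm2⟩, ⟨hprod, hm0⟩, hcop⟩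
      have hane : ∀ j, a j ≠ 0 := by
        intro j h
        exact hm0 (by rw [← hprod]; exact Finset.prod_eq_zero (Finset.mem_univ j) h)
      refine ⟨fun i => ⟨Nat.one_le_iff_ne_zero.mpr (hane i), ?_⟩, hcop, hprod ▸ hm2⟩
      calc a i ≤ ∏ j, a j := Finset.single_le_prod' (fun j _ => Nat.one_le_iff_ne_zero.mpr (hane j)) (Finset.mem_univ i)
        _ ≤ n := hprod ▸ hm2
  rw [hset, Finset.card_biUnion]
  · exact Finset.sum_congr rfl fun m hm => CountAux.card_cop
      (Nat.one_le_iff_ne_zero.mp (Finset.mem_Icc.mp hm).1)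
  · intro x hx y hy hxy
    apply Finset.disjoint_left.mpr
    intro a hax hay
    exact hxy (((CountAux.mem_cop.mp hax).1.1.symm).trans (CountAux.mem_cop.mp hay).1.1)
end

section
/- For all positive integers n and k, 0 ≤ n · Σ_{i=1}^{n} δ_k(i)/i − Σ_{i=1}^{n} ⌊n/i⌋ δ_k(i) ≤ Δ_k(n), where the middle expression is computed in the rational numbers. In particular, Σ_{i=1}^{n} k^{ω(i)} = n · Σ_{i=1}^{n} δ_k(i)/i + O(Δ_k(n)). -/
/-- `delta k n` is the generalization `δ_k` of `μ²`: it equals `(k-1)^{ω(n)}`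
when `n` is squarefree and `0` otherwise (in particular `δ_k(1) = 1`). -/
def delta (k n : ℕ) : ℕ :=
  if Squarefree n then (k - 1) ^ n.primeFactors.card else 0

/-- `Delta k x = Σ_{n ≤ x} δ_k(n)` is the summatory function of `δ_k`. -/
def Delta (k x : ℕ) : ℕ := ∑ n ∈ Finset.Icc 1 x, delta k n


open Finset in
lemma delta_sum_divisors {k : ℕ} (hk : 0 < k) {m : ℕ} (hm : m ≠ 0) :
    ∑ d ∈ m.divisors, delta k d = k ^ m.primeFactors.card := by
  classical
  have h1 : ∑ d ∈ m.divisors, delta k d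
      = ∑ d ∈ m.divisors.filter Squarefree, (k - 1) ^ d.primeFactors.card := by
    rw [Finset.sum_filter]; simp [delta]
  rw [h1, Nat.sum_divisors_filter_squarefree hm]
  have hfin : (UniqueFactorizationMonoid.normalizedFactors m).toFinset = m.primeFactors := by
    rw [Nat.factors_eq]; simp [Nat.toFinset_factors]
  rw [hfin]
  have h2 : ∀ t ∈ m.primeFactors.powerset,
      (k - 1) ^ (t.val.prod).primeFactors.card = (k - 1) ^ t.card := by
    intro t ht
    have hp : ∀ p ∈ t, p.Prime := fun p hp =>
      Nat.prime_of_mem_primeFactors ((Finset.mem_powerset.mp ht) hp)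
    have : (∏ p ∈ t, p).primeFactors = t := Nat.primeFactors_prod hp
    have hv : t.val.prod = ∏ p ∈ t, p := by
      rw [Finset.prod_eq_multiset_prod]; simp
    rw [hv, this]
  rw [Finset.sum_congr rfl h2, Finset.sum_powerset_apply_card]
  have := add_pow (k - 1) 1 m.primeFactors.card
  rw [Nat.sub_add_cancel hk] at this
  rw [this]
  refine Finset.sum_congr rfl fun i _ => ?_
  simp [smul_eq_mul, mul_comm]

open Finset in
lemma key_identity (n k : ℕ) (hk : 0 < k) :
    ∑ i ∈ Icc 1 n, k ^ i.primeFactors.card = ∑ i ∈ Icc 1 n, (n / i) * delta k i := by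
  classical
  have h1 : ∀ m ∈ Icc 1 n, k ^ m.primeFactors.card
      = ∑ d ∈ Icc 1 n, if d ∣ m then delta k d else 0 := by
    intro m hm
    rw [mem_Icc] at hm
    have hm0 : m ≠ 0 := by omega
    rw [← delta_sum_divisors hk hm0, ← Finset.sum_filter]
    congr 1
    ext d
    simp only [mem_filter, mem_Icc, Nat.mem_divisors]
    constructor
    · rintro ⟨hd, -⟩
      have hd1 : 0 < d := Nat.pos_of_dvd_of_pos hd (by omega)
      exact ⟨⟨hd1, le_trans (Nat.le_of_dvd (by omega) hd) hm.2⟩, hd⟩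
    · rintro ⟨-, hd⟩; exact ⟨hd, hm0⟩
  rw [Finset.sum_congr rfl h1, Finset.sum_comm]
  refine Finset.sum_congr rfl fun d hd => ?_
  rw [← Finset.sum_filter, Finset.sum_const, smul_eq_mul]
  congr 1
  have : Icc 1 n = Ioc 0 n := by rw [← Finset.Icc_add_one_left_eq_Ioc]; rfl
  rw [this]
  exact Nat.Ioc_filter_dvd_card_eq_div n d

/-- For all positive integers `n` and `k`,
`0 ≤ n · Σ_{i=1}^{n} δ_k(i)/i − Σ_{i=1}^{n} ⌊n/i⌋ δ_k(i) ≤ Δ_k(n)` (computed in `ℚ`);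
in particular `Σ_{i=1}^{n} k^{ω(i)} = n · Σ_{i=1}^{n} δ_k(i)/i + O(Δ_k(n))`, i.e.
`|Σ_{i=1}^{n} k^{ω(i)} − n · Σ_{i=1}^{n} δ_k(i)/i| ≤ Δ_k(n)`. -/
theorem sum_pow_omega_weighted_reciprocal_sum (n k : ℕ) (hn : 0 < n) (hk : 0 < k) :
    (0 ≤ (n : ℚ) * ∑ i ∈ Finset.Icc 1 n, (delta k i : ℚ) / i
          - ∑ i ∈ Finset.Icc 1 n, ((n / i : ℕ) : ℚ) * delta k i ∧
      (n : ℚ) * ∑ i ∈ Finset.Icc 1 n, (delta k i : ℚ) / i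
          - ∑ i ∈ Finset.Icc 1 n, ((n / i : ℕ) : ℚ) * delta k i ≤ Delta k n) ∧
    |(∑ i ∈ Finset.Icc 1 n, (k : ℚ) ^ i.primeFactors.card)
        - (n : ℚ) * ∑ i ∈ Finset.Icc 1 n, (delta k i : ℚ) / i| ≤ Delta k n := by
  have hD : (n : ℚ) * ∑ i ∈ Finset.Icc 1 n, (delta k i : ℚ) / i
      - ∑ i ∈ Finset.Icc 1 n, ((n / i : ℕ) : ℚ) * delta k i
      = ∑ i ∈ Finset.Icc 1 n, ((n : ℚ) / i - ((n / i : ℕ) : ℚ)) * delta k i := by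
    rw [Finset.mul_sum, ← Finset.sum_sub_distrib]
    refine Finset.sum_congr rfl fun i _ => ?_
    ring
  have hlow : ∀ i ∈ Finset.Icc 1 n, (0:ℚ) ≤ ((n : ℚ) / i - ((n / i : ℕ) : ℚ)) * delta k i := by
    intro i hi
    have := Nat.cast_div_le (α := ℚ) (m := n) (n := i)
    exact mul_nonneg (by linarith) (Nat.cast_nonneg _)
  have hup : ∀ i ∈ Finset.Icc 1 n,
      ((n : ℚ) / i - ((n / i : ℕ) : ℚ)) * delta k i ≤ (delta k i : ℚ) := by
    intro i hi
    rw [Finset.mem_Icc] at hi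
    have hi0 : (0:ℚ) < i := by exact_mod_cast hi.1
    have h1 : n < n / i * i + i := Nat.lt_div_mul_add (by omega)
    have h2 : (n:ℚ) < (n / i : ℕ) * i + i := by exact_mod_cast h1
    have h3 : (n:ℚ) / i - ((n / i : ℕ) : ℚ) ≤ 1 := by
      rw [div_sub' (ne_of_gt hi0), div_le_one hi0]
      nlinarith
    nlinarith [Nat.cast_nonneg (α := ℚ) (delta k i)]
  have hDelta : (Delta k n : ℚ) = ∑ i ∈ Finset.Icc 1 n, (delta k i : ℚ) := by
    simp [Delta]
  have h0 : 0 ≤ (n : ℚ) * ∑ i ∈ Finset.Icc 1 n, (delta k i : ℚ) / i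
      - ∑ i ∈ Finset.Icc 1 n, ((n / i : ℕ) : ℚ) * delta k i := by
    rw [hD]; exact Finset.sum_nonneg hlow
  have h1 : (n : ℚ) * ∑ i ∈ Finset.Icc 1 n, (delta k i : ℚ) / i
      - ∑ i ∈ Finset.Icc 1 n, ((n / i : ℕ) : ℚ) * delta k i ≤ Delta k n := by
    rw [hD, hDelta]; exact Finset.sum_le_sum hup
  refine ⟨⟨h0, h1⟩, ?_⟩
  have hS : (∑ i ∈ Finset.Icc 1 n, (k : ℚ) ^ i.primeFactors.card)
      = ∑ i ∈ Finset.Icc 1 n, ((n / i : ℕ) : ℚ) * delta k i := by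
    have := key_identity n k hk
    have h := congrArg (fun x : ℕ => (x : ℚ)) this
    push_cast at h ⊢
    convert h using 2
  rw [hS, abs_sub_comm, abs_of_nonneg h0]
  exact h1
end

section
/- For all positive integers x and k, T_k(x) = A_k(x) − B_k(x). -/
open Finset

lemma fiber_card (x k m : ℕ) (hm : 1 ≤ m) (hmx : m ≤ x) :
    ((Fintype.piFinset fun _ : Fin k => Finset.Icc 1 x).filter
        (fun a => (∀ i j, i ≠ j → Nat.Coprime (a i) (a j)) ∧ ∏ i, a i = m)).card
      = k ^ m.primeFactors.card := by
  classical
  have hm0 : m ≠ 0 := by omega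
  have hcard : (Finset.univ : Finset (↥m.primeFactors → Fin k)).card
      = k ^ m.primeFactors.card := by
    simp [Fintype.card_fun]
  rw [← hcard]
  symm
  -- the map from colourings to tuples
  set g : (↥m.primeFactors → Fin k) → (Fin k → ℕ) :=
    fun f i => ∏ p ∈ m.primeFactors.attach with f p = i, (p : ℕ) ^ m.factorization p with hg
  have hprod : ∀ f, ∏ i, g f i = m := by
    intro f
    rw [hg]
    simp only
    rw [Finset.prod_fiberwise m.primeFactors.attach f (fun p => (p : ℕ) ^ m.factorization p)]
    rw [Finset.prod_attach m.primeFactors (fun p => (p : ℕ) ^ m.factorization p)]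
    exact Nat.factorization_prod_pow_eq_self hm0
  have hdvd_eq : ∀ f (q : ℕ), q.Prime → ∀ (i : Fin k), q ∣ g f i →
      ∃ hqm : q ∈ m.primeFactors, f ⟨q, hqm⟩ = i := by
    intro f q hq i hdvd
    obtain ⟨p, hp, hpd⟩ := (Prime.exists_mem_finset_dvd hq.prime hdvd)
    have hqp : q = (p : ℕ) := by
      have hpp : (p : ℕ).Prime := Nat.prime_of_mem_primeFactors p.2
      exact (Nat.prime_dvd_prime_iff_eq hq hpp).mp (hq.dvd_of_dvd_pow hpd)
    subst hqp
    exact ⟨p.2, by simpa using (Finset.mem_filter.mp hp).2⟩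
  have hmem_dvd : ∀ f (p : ↥m.primeFactors), (p : ℕ) ∣ g f (f p) := by
    intro f p
    refine dvd_trans (dvd_pow_self (p : ℕ) ?_) (Finset.dvd_prod_of_mem _ ?_)
    · exact Finsupp.mem_support_iff.mp p.2
    · simp
  refine Finset.card_bij (fun f _ => g f) ?_ ?_ ?_
  · -- maps into the fiber
    intro f _
    have hd : ∀ i, g f i ∣ m := by
      intro i
      rw [← hprod f]
      exact Finset.dvd_prod_of_mem _ (Finset.mem_univ i)
    refine Finset.mem_filter.mpr ⟨?_, ?_, hprod f⟩
    · refine Fintype.mem_piFinset.mpr fun i => Finset.mem_Icc.mpr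
        ⟨Nat.one_le_iff_ne_zero.mpr ?_, le_trans (Nat.le_of_dvd (by omega) (hd i)) hmx⟩
      exact fun h0 => hm0 (Nat.eq_zero_of_zero_dvd (h0 ▸ hd i))
    · intro i j hij
      refine Nat.Coprime.prod_left fun p hp => Nat.Coprime.prod_right fun q hq => ?_
      have hfp := (Finset.mem_filter.mp hp).2
      have hfq := (Finset.mem_filter.mp hq).2
      have hpq : (p : ℕ) ≠ (q : ℕ) := fun h => hij (by
        rw [← hfp, ← hfq, Subtype.coe_injective h])
      exact Nat.Coprime.pow _ _ ((Nat.coprime_primes (Nat.prime_of_mem_primeFactors p.2)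
        (Nat.prime_of_mem_primeFactors q.2)).mpr hpq)
  · -- injective
    intro f₁ _ f₂ _ hgf
    have hgf' : g f₁ = g f₂ := hgf
    funext p
    have h1 := hmem_dvd f₁ p
    rw [hgf'] at h1
    obtain ⟨hqm, hfq⟩ := hdvd_eq f₂ (p : ℕ) (Nat.prime_of_mem_primeFactors p.2) (f₁ p) h1
    rw [← hfq]
  · -- surjective
    intro a ha
    obtain ⟨hpi, hcop, hpa⟩ := Finset.mem_filter.mp ha
    have hane : ∀ i, a i ≠ 0 := by
      intro i hi
      apply hm0
      rw [← hpa]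
      exact Finset.prod_eq_zero (Finset.mem_univ i) hi
    have hex : ∀ p : ↥m.primeFactors, ∃ i, (p : ℕ) ∣ a i := by
      intro p
      have : (p : ℕ) ∣ ∏ i, a i := by
        rw [hpa]; exact Nat.dvd_of_mem_primeFactors p.2
      obtain ⟨i, _, hi⟩ := Prime.exists_mem_finset_dvd
        (Nat.prime_of_mem_primeFactors p.2).prime this
      exact ⟨i, hi⟩
    set f : ↥m.primeFactors → Fin k := fun p => (hex p).choose with hf
    have hfspec : ∀ p : ↥m.primeFactors, (p : ℕ) ∣ a (f p) := fun p => (hex p).choose_spec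
    have huniq : ∀ (p : ↥m.primeFactors) (i : Fin k), (p : ℕ) ∣ a i → f p = i := by
      intro p i hpi'
      by_contra hne
      have hcp := hcop _ _ hne
      have : (p : ℕ) ∣ Nat.gcd (a (f p)) (a i) := Nat.dvd_gcd (hfspec p) hpi'
      rw [hcp] at this
      exact (Nat.prime_of_mem_primeFactors p.2).one_lt.ne' (Nat.eq_one_of_dvd_one this)
    refine ⟨f, Finset.mem_univ f, ?_⟩
    funext i
    -- key claim: a i is the product of its prime powers with full m-multiplicity
    have hfilter : (m.primeFactors.attach.filter (fun p => f p = i))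
        = m.primeFactors.attach.filter (fun p : ↥m.primeFactors => (p : ℕ) ∣ a i) := by
      ext p
      simp only [Finset.mem_filter, Finset.mem_attach, true_and]
      exact ⟨fun h => h ▸ hfspec p, fun h => huniq p i h⟩
    have hvp : ∀ p : ℕ, p.Prime → p ∣ a i → m.factorization p = (a i).factorization p := by
      intro p hp hpai
      have hmsplit : m = a i * ∏ j ∈ {i}ᶜ, a j := by
        rw [← hpa]; exact (Fintype.prod_eq_mul_prod_compl i a)
      have hcpr : Nat.Coprime (a i) (∏ j ∈ {i}ᶜ, a j) := by
        refine Nat.Coprime.prod_right fun j hj => hcop i j ?_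
        simp only [Finset.mem_compl, Finset.mem_singleton] at hj
        exact fun h => hj h.symm
      have hc0 : (∏ j ∈ {i}ᶜ, a j) ≠ 0 := Finset.prod_ne_zero_iff.mpr fun j _ => hane j
      rw [hmsplit, Nat.factorization_mul (hane i) hc0]
      have : (∏ j ∈ {i}ᶜ, a j).factorization p = 0 := by
        rw [Nat.factorization_eq_zero_iff]
        refine Or.inr (Or.inl fun hdc => ?_)
        have : p ∣ Nat.gcd (a i) (∏ j ∈ {i}ᶜ, a j) := Nat.dvd_gcd hpai hdc
        rw [hcpr] at this
        exact hp.one_lt.ne' (Nat.eq_one_of_dvd_one this)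
      simp [this]
    -- now compute g f i
    rw [hg]
    simp only
    rw [hfilter]
    have hattach : ∏ p ∈ m.primeFactors.attach.filter (fun p : ↥m.primeFactors => (p : ℕ) ∣ a i), (p : ℕ) ^ m.factorization p
        = ∏ p ∈ m.primeFactors with p ∣ a i, p ^ m.factorization p := by
      rw [Finset.prod_filter, Finset.prod_attach m.primeFactors
        (fun p => if p ∣ a i then p ^ m.factorization p else 1), ← Finset.prod_filter]
    rw [hattach]
    have hsets : m.primeFactors.filter (fun p => p ∣ a i) = (a i).primeFactors := by
      ext p
      simp only [Finset.mem_filter, Nat.mem_primeFactors]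
      constructor
      · rintro ⟨⟨hp, _, _⟩, hd⟩; exact ⟨hp, hd, hane i⟩
      · rintro ⟨hp, hd, _⟩
        exact ⟨⟨hp, hd.trans (hpa ▸ Finset.dvd_prod_of_mem a (Finset.mem_univ i)), hm0⟩, hd⟩
    rw [hsets]
    have : ∏ p ∈ (a i).primeFactors, p ^ m.factorization p
        = ∏ p ∈ (a i).primeFactors, p ^ (a i).factorization p := by
      refine Finset.prod_congr rfl fun p hp => ?_
      rw [hvp p (Nat.prime_of_mem_primeFactors hp) (Nat.dvd_of_mem_primeFactors hp)]
    rw [this]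
    exact Nat.factorization_prod_pow_eq_self (hane i)

lemma pow_omega_eq_sum (k m : ℕ) (hk : 1 ≤ k) (hm : m ≠ 0) :
    k ^ m.primeFactors.card = ∑ d ∈ m.divisors with Squarefree d, (k - 1) ^ d.primeFactors.card := by
  classical
  rw [Nat.sum_divisors_filter_squarefree hm]
  have htf : (UniqueFactorizationMonoid.normalizedFactors m).toFinset = m.primeFactors := by
    rw [Nat.factors_eq]
    rfl
  rw [htf]
  have hcongr : ∀ S ∈ m.primeFactors.powerset,
      (k - 1) ^ (Multiset.prod S.val).primeFactors.card = (k - 1) ^ S.card := by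
    intro S hS
    rw [Finset.mem_powerset] at hS
    rw [show (Multiset.prod S.val) = ∏ p ∈ S, p from (Finset.prod_val S ▸ rfl), Nat.primeFactors_prod fun p hp => Nat.prime_of_mem_primeFactors (hS hp)]
  rw [Finset.sum_congr rfl hcongr, Finset.sum_powerset_apply_card (fun j => (k-1)^j)]
  have := add_pow (k - 1) 1 m.primeFactors.card
  rw [Nat.sub_add_cancel hk] at this
  rw [this]
  refine Finset.sum_congr rfl fun j hj => ?_
  rw [smul_eq_mul, one_pow, mul_one, mul_comm]
  simp

lemma T_nat (x k : ℕ) (hx : 0 < x) (hk : 0 < k) :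
    ((Fintype.piFinset fun _ : Fin k => Finset.Icc 1 x).filter
        (fun a => (∀ i j, i ≠ j → Nat.Coprime (a i) (a j)) ∧ ∏ i, a i ≤ x)).card
      = ∑ n ∈ (Finset.Icc 1 x).filter (fun n => Squarefree n),
          (x / n) * (k - 1) ^ n.primeFactors.card := by
  classical
  rw [Finset.card_eq_sum_card_fiberwise (f := fun a => ∏ i, a i) (t := Finset.Icc 1 x) ?_]
  swap
  · intro a ha
    rw [Finset.mem_coe, Finset.mem_filter] at ha
    obtain ⟨hpi, _, hle⟩ := ha
    refine Finset.mem_Icc.mpr ⟨Finset.one_le_prod' fun i _ => ?_, hle⟩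
    exact (Finset.mem_Icc.mp (Fintype.mem_piFinset.mp hpi i)).1
  have hfib : ∀ m ∈ Finset.Icc 1 x,
      ((Fintype.piFinset fun _ : Fin k => Finset.Icc 1 x).filter
          (fun a => (∀ i j, i ≠ j → Nat.Coprime (a i) (a j)) ∧ ∏ i, a i ≤ x)).filter
        (fun a => ∏ i, a i = m)
      = (Fintype.piFinset fun _ : Fin k => Finset.Icc 1 x).filter
          (fun a => (∀ i j, i ≠ j → Nat.Coprime (a i) (a j)) ∧ ∏ i, a i = m) := by
    intro m hm
    rw [Finset.mem_Icc] at hm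
    rw [Finset.filter_filter]
    refine Finset.filter_congr fun a _ => ?_
    constructor
    · rintro ⟨⟨h1, _⟩, h3⟩; exact ⟨h1, h3⟩
    · rintro ⟨h1, h3⟩; exact ⟨⟨h1, h3 ▸ hm.2⟩, h3⟩
  calc ∑ m ∈ Finset.Icc 1 x,
        (((Fintype.piFinset fun _ : Fin k => Finset.Icc 1 x).filter
          (fun a => (∀ i j, i ≠ j → Nat.Coprime (a i) (a j)) ∧ ∏ i, a i ≤ x)).filter
            (fun a => ∏ i, a i = m)).card
      = ∑ m ∈ Finset.Icc 1 x, k ^ m.primeFactors.card := by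
        refine Finset.sum_congr rfl fun m hm => ?_
        rw [hfib m hm]
        rw [Finset.mem_Icc] at hm
        exact fiber_card x k m hm.1 hm.2
    _ = ∑ m ∈ Finset.Icc 1 x, ∑ d ∈ m.divisors with Squarefree d,
          (k - 1) ^ d.primeFactors.card := by
        refine Finset.sum_congr rfl fun m hm => ?_
        rw [Finset.mem_Icc] at hm
        exact pow_omega_eq_sum k m hk (by omega)
    _ = ∑ d ∈ (Finset.Icc 1 x).filter (fun n => Squarefree n),
          ∑ m ∈ (Finset.Icc 1 x).filter (fun m => d ∣ m),
            (k - 1) ^ d.primeFactors.card := by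
        refine Finset.sum_comm' ?_
        intro m d
        simp only [Finset.mem_Icc, Finset.mem_filter, Nat.mem_divisors]
        constructor
        · rintro ⟨⟨hm1, hmx⟩, ⟨hdm, hm0⟩, hsq⟩
          have hd1 : 1 ≤ d := Nat.pos_of_dvd_of_pos hdm (by omega)
          exact ⟨⟨⟨hm1, hmx⟩, hdm⟩, ⟨hd1, le_trans (Nat.le_of_dvd (by omega) hdm) hmx⟩, hsq⟩
        · rintro ⟨⟨⟨hm1, hmx⟩, hdm⟩, ⟨hd1, hdx⟩, hsq⟩
          exact ⟨⟨hm1, hmx⟩, ⟨hdm, by omega⟩, hsq⟩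
    _ = ∑ d ∈ (Finset.Icc 1 x).filter (fun n => Squarefree n),
          (x / d) * (k - 1) ^ d.primeFactors.card := by
        refine Finset.sum_congr rfl fun d hd => ?_
        rw [Finset.sum_const, smul_eq_mul]
        congr 1
        rw [show Finset.Icc 1 x = Finset.Ioc 0 x from rfl]
        exact Nat.Ioc_filter_dvd_card_eq_div x d

/-- For all positive integers `x` and `k`, `T_k(x) = A_k(x) − B_k(x)`,
where `T_k(x)` is the number of ordered `k`-tuples of pairwise relatively prime
positive integers `≤ x` with product at most `x`,
`A_k(x) = Σ_{n ≤ x} ⌊x/n⌋ (k−1)^{ω(n)}`, and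
`B_k(x) = Σ_{n ≤ x, n not squarefree} ⌊x/n⌋ (k−1)^{ω(n)}`. -/
theorem T_eq_A_sub_B (x k : ℕ) (hx : 0 < x) (hk : 0 < k) :
    (((Fintype.piFinset fun _ : Fin k => Finset.Icc 1 x).filter
        (fun a => (∀ i j, i ≠ j → Nat.Coprime (a i) (a j)) ∧ ∏ i, a i ≤ x)).card : ℤ)
      = (∑ n ∈ Finset.Icc 1 x, ((x / n : ℕ) : ℤ) * (k - 1) ^ n.primeFactors.card)
        - ∑ n ∈ (Finset.Icc 1 x).filter (fun n => ¬ Squarefree n),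
            ((x / n : ℕ) : ℤ) * (k - 1) ^ n.primeFactors.card := by
  classical
  have hsplit := Finset.sum_filter_add_sum_filter_not (Finset.Icc 1 x)
    (fun n => Squarefree n)
    (fun n => ((x / n : ℕ) : ℤ) * (k - 1) ^ n.primeFactors.card)
  rw [← hsplit, add_sub_cancel_right, T_nat x k hx hk, Nat.cast_sum]
  refine Finset.sum_congr rfl fun n _ => ?_
  rw [Nat.cast_mul, Nat.cast_pow, Nat.cast_sub hk, Nat.cast_one]
end

section
/- For all positive integers x, k, m, Σ_{d | m} μ(d) · C_k(⌊x/d⌋, d) = E_k(x, m), where the sum runs over all positive divisors d of m and μ is the Möbius function. -/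
/-- `C k x m = Σ_{n ≤ x} ⌊x/n⌋ (k−1)^{ω(mn)}`. -/
def C (k x m : ℕ) : ℕ :=
  ∑ n ∈ Finset.Icc 1 x, (x / n) * (k - 1) ^ (m * n).primeFactors.card

/-- `E k x m = Σ_{n ≤ x, gcd(m,n)=1} ⌊x/n⌋ (k−1)^{ω(n)}`. -/
def E (k x m : ℕ) : ℕ :=
  ∑ n ∈ (Finset.Icc 1 x).filter (fun n => Nat.gcd m n = 1),
    (x / n) * (k - 1) ^ n.primeFactors.card

open ArithmeticFunction Finset in
lemma sum_moebius_divisors (g : ℕ) (hg : 0 < g) :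
    ∑ d ∈ g.divisors, (moebius d : ℤ) = if g = 1 then 1 else 0 := by
  have := coe_mul_zeta_apply (R := ℤ) (f := (moebius : ArithmeticFunction ℤ)) (x := g)
  rw [moebius_mul_coe_zeta] at this
  rw [← this, ArithmeticFunction.one_apply]

open Finset in
lemma C_reindex (k x d : ℕ) (hd : 0 < d) :
    C k (x / d) d = ∑ j ∈ (Icc 1 x).filter (fun j => d ∣ j),
      (x / j) * (k - 1) ^ j.primeFactors.card := by
  unfold C
  refine sum_nbij' (fun n => d * n) (fun j => j / d) ?_ ?_ ?_ ?_ ?_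
  · intro n hn
    simp only [mem_Icc, mem_filter] at hn ⊢
    refine ⟨⟨?_, ?_⟩, Dvd.intro n rfl⟩
    · exact Nat.one_le_iff_ne_zero.2 (Nat.mul_ne_zero hd.ne' (by omega))
    · rw [mul_comm]; exact Nat.mul_le_of_le_div d n x hn.2
  · intro j hj
    simp only [mem_Icc, mem_filter] at hj ⊢
    obtain ⟨⟨h1, h2⟩, hdvd⟩ := hj
    constructor
    · exact Nat.one_le_div_iff hd |>.2 (Nat.le_of_dvd h1 hdvd)
    · exact Nat.div_le_div_right h2
  · intro n hn
    exact Nat.mul_div_cancel_left n hd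
  · intro j hj
    simp only [mem_filter] at hj
    exact Nat.mul_div_cancel' hj.2
  · intro n hn
    rw [Nat.div_div_eq_div_mul]

open ArithmeticFunction Finset in
/-- For all positive integers `x`, `k`, `m`,
`Σ_{d ∣ m} μ(d) · C_k(⌊x/d⌋, d) = E_k(x, m)`, the sum running over all positive
divisors of `m`, where `μ` is the Möbius function. -/
theorem sum_moebius_C_eq_E (x k m : ℕ) (hx : 0 < x) (hk : 0 < k) (hm : 0 < m) :
    ∑ d ∈ m.divisors, (moebius d : ℤ) * C k (x / d) d = (E k x m : ℤ) := by
  have h1 : ∀ d ∈ m.divisors, (moebius d : ℤ) * C k (x / d) d =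
      ∑ j ∈ (Icc 1 x).filter (fun j => d ∣ j),
        (moebius d : ℤ) * ((x / j) * (k - 1) ^ j.primeFactors.card : ℕ) := by
    intro d hd
    rw [C_reindex k x d (Nat.pos_of_mem_divisors hd)]
    push_cast
    rw [Finset.mul_sum]
  rw [Finset.sum_congr rfl h1]
  simp_rw [sum_filter]
  rw [Finset.sum_comm]
  unfold E
  rw [sum_filter]
  rw [Nat.cast_sum]
  refine Finset.sum_congr rfl fun j hj => ?_
  simp only [mem_Icc] at hj
  set t : ℤ := (((x / j) * (k - 1) ^ j.primeFactors.card : ℕ) : ℤ) with ht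
  have key : ∑ d ∈ m.divisors, (if d ∣ j then (moebius d : ℤ) * t else 0) =
      (∑ d ∈ (Nat.gcd m j).divisors, (moebius d : ℤ)) * t := by
    rw [Finset.sum_mul, ← Finset.sum_filter]
    refine Finset.sum_congr ?_ (fun _ _ => rfl)
    ext d
    simp only [mem_filter, Nat.mem_divisors, Nat.dvd_gcd_iff]
    constructor
    · rintro ⟨⟨hdm, _⟩, hdj⟩; exact ⟨⟨hdm, hdj⟩, (Nat.gcd_pos_of_pos_left j hm).ne'⟩
    · rintro ⟨⟨hdm, hdj⟩, _⟩; exact ⟨⟨hdm, hm.ne'⟩, hdj⟩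
  rw [key, sum_moebius_divisors _ (Nat.gcd_pos_of_pos_left j hm)]
  by_cases h : Nat.gcd m j = 1 <;> simp [h, ht, Int.natCast_div]
end

section
/- For every positive integer n, Σ_{i=1}^{n} 2^{ω(i)} = 2n − 1 + 2 · Σ_{a : 1 < a² < n} ( φ(⌊n/a⌋, a) − φ(a) ), where the sum runs over all integers a > 1 with a² < n. -/
open Finset in
lemma recover_left {i a b : ℕ} (hi : i ≠ 0) (hab : a * b = i) (hco : Nat.Coprime a b) :
    ∏ p ∈ a.primeFactors, p ^ i.factorization p = a := by
  have ha : a ≠ 0 := left_ne_zero_of_mul (hab ▸ hi)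
  have hb : b ≠ 0 := right_ne_zero_of_mul (hab ▸ hi)
  have key : ∀ p ∈ a.primeFactors, p ^ i.factorization p = p ^ a.factorization p := by
    intro p hp
    have hpp := Nat.prime_of_mem_primeFactors hp
    have hpa : p ∣ a := Nat.dvd_of_mem_primeFactors hp
    have hpb : ¬ p ∣ b := by
      rw [← hpp.coprime_iff_not_dvd]
      exact Nat.Coprime.coprime_dvd_left hpa hco
    have : i.factorization p = a.factorization p := by
      rw [← hab, Nat.factorization_mul ha hb]
      simp [Nat.factorization_eq_zero_of_not_dvd hpb]
    rw [this]
  rw [Finset.prod_congr rfl key]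
  conv_rhs => rw [← Nat.factorization_prod_pow_eq_self ha]
  rfl

lemma card_coprime_antidiag (i : ℕ) (hi : i ≠ 0) :
    ((i.divisorsAntidiagonal).filter (fun p => Nat.Coprime p.1 p.2)).card
      = 2 ^ i.primeFactors.card := by
  rw [← Finset.card_powerset]
  apply Finset.card_bij (fun p _ => p.1.primeFactors)
  · intro p hp
    simp only [Finset.mem_filter, Nat.mem_divisorsAntidiagonal] at hp
    exact Finset.mem_powerset.2
      (Nat.primeFactors_mono (Dvd.intro _ hp.1.1) hi)
  · intro p hp q hq h
    simp only [Finset.mem_filter, Nat.mem_divisorsAntidiagonal] at hp hq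
    have h1 : p.1 = q.1 := by
      rw [← recover_left hi hp.1.1 hp.2, ← recover_left hi hq.1.1 hq.2, h]
    have hp1 : p.1 ≠ 0 := left_ne_zero_of_mul (hp.1.1 ▸ hi)
    have h2 : p.2 = q.2 := by
      apply Nat.eq_of_mul_eq_mul_left (Nat.pos_of_ne_zero hp1)
      rw [hp.1.1, h1, hq.1.1]
    exact Prod.ext h1 h2
  · intro s hs
    rw [Finset.mem_powerset] at hs
    set a := ∏ p ∈ s, p ^ i.factorization p with ha_def
    set b := ∏ p ∈ i.primeFactors \ s, p ^ i.factorization p with hb_def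
    have hab : a * b = i := by
      rw [ha_def, hb_def, ← Finset.prod_union (Finset.disjoint_sdiff),
        Finset.union_sdiff_of_subset hs]
      conv_rhs => rw [← Nat.factorization_prod_pow_eq_self hi]
      rfl
    have hco : Nat.Coprime a b := by
      apply Nat.Coprime.prod_left
      intro p hp
      apply Nat.Coprime.prod_right
      intro q hq
      have hps := hs hp
      have hpp := Nat.prime_of_mem_primeFactors hps
      have hqp := Nat.prime_of_mem_primeFactors (Finset.mem_sdiff.1 hq).1
      have hne : p ≠ q := by
        rintro rfl
        exact (Finset.mem_sdiff.1 hq).2 hp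
      exact Nat.Coprime.pow _ _ ((Nat.coprime_primes hpp hqp).2 hne)
    refine ⟨(a, b), ?_, ?_⟩
    · simp only [Finset.mem_filter, Nat.mem_divisorsAntidiagonal]
      exact ⟨⟨hab, hi⟩, hco⟩
    · have ha0 : a ≠ 0 := left_ne_zero_of_mul (hab ▸ hi)
      ext p
      simp only [Nat.mem_primeFactors, ne_eq, ha0, not_false_iff, and_true]
      constructor
      · rintro ⟨hpp, hpa⟩
        rw [hpp.prime.dvd_finset_prod_iff] at hpa
        obtain ⟨q, hq, hpq⟩ := hpa
        have hqp := Nat.prime_of_mem_primeFactors (hs hq)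
        have heq : p = q := (Nat.prime_dvd_prime_iff_eq hpp hqp).1 (hpp.dvd_of_dvd_pow hpq)
        rwa [heq]
      · intro hps
        have hpp := Nat.prime_of_mem_primeFactors (hs hps)
        refine ⟨hpp, dvd_trans (dvd_pow_self p ?_) (Finset.dvd_prod_of_mem _ hps)⟩
        exact Nat.Prime.factorization_pos_of_dvd hpp hi
          (Nat.dvd_of_mem_primeFactors (hs hps)) |>.ne'

/-- `phi x a` (written `φ(x, a)` in the paper) is the number of positive
integers not exceeding `x` that are relatively prime to `a`. -/
def phi (x a : ℕ) : ℕ := ((Finset.Icc 1 x).filter (fun b => Nat.Coprime b a)).card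

lemma tot_eq (a : ℕ) (ha : 1 < a) :
    ((Finset.Icc 1 a).filter (fun b => Nat.Coprime b a)).card = a.totient := by
  rw [Nat.totient]
  congr 1
  ext b
  simp only [Finset.mem_filter, Finset.mem_Icc, Finset.mem_range]
  constructor
  · rintro ⟨⟨hb1, hba⟩, hco⟩
    have : b ≠ a := by
      rintro rfl
      exact ha.ne' ((Nat.coprime_self b).1 hco)
    exact ⟨lt_of_le_of_ne hba this, hco.symm⟩
  · rintro ⟨hba, hco⟩
    have : b ≠ 0 := by
      rintro rfl
      exact ha.ne' (Nat.coprime_zero_right a |>.1 hco)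
    exact ⟨⟨Nat.one_le_iff_ne_zero.2 this, hba.le⟩, hco.symm⟩

lemma phi_split (a m : ℕ) (ha : 1 < a) (ham : a ≤ m) :
    phi m a = a.totient + ((Finset.Icc (a+1) m).filter (fun b => Nat.Coprime b a)).card := by
  have hsplit : Finset.Icc 1 m = Finset.Icc 1 a ∪ Finset.Icc (a+1) m := by
    ext x; simp only [Finset.mem_Icc, Finset.mem_union]; omega
  have hdisj : Disjoint (Finset.Icc 1 a) (Finset.Icc (a+1) m) := by
    rw [Finset.disjoint_left]; intro x hx hx'
    simp only [Finset.mem_Icc] at hx hx'; omega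
  rw [phi, ← tot_eq a ha, hsplit, Finset.filter_union,
    Finset.card_union_of_disjoint (Finset.disjoint_filter_filter hdisj)]

/-- For every positive integer `n`,
`Σ_{i=1}^{n} 2^{ω(i)} = 2n − 1 + 2 · Σ_{a : 1 < a, a² < n} (φ(⌊n/a⌋, a) − φ(a))`,
the sum running over all integers `a > 1` with `a² < n`, where `φ(a)` is
Euler's totient function. -/
theorem sum_two_pow_omega_eq_totient_sum (n : ℕ) (hn : 0 < n) :
    ((∑ i ∈ Finset.Icc 1 n, 2 ^ i.primeFactors.card : ℕ) : ℤ)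
      = 2 * n - 1 + 2 * ∑ a ∈ (Finset.Icc 1 n).filter (fun a => 1 < a ∧ a ^ 2 < n),
          ((phi (n / a) a : ℤ) - (Nat.totient a : ℤ)) := by
  classical
  set A := (Finset.Icc 1 n).filter (fun a => 1 < a ∧ a ^ 2 < n) with hA
  set T := ((Finset.Icc 1 n) ×ˢ (Finset.Icc 1 n)).filter
      (fun p : ℕ × ℕ => p.1 * p.2 ≤ n ∧ Nat.Coprime p.1 p.2) with hT
  -- Step 1 : the LHS counts coprime pairs with product ≤ n
  have h1 : ∑ i ∈ Finset.Icc 1 n, 2 ^ i.primeFactors.card = T.card := by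
    rw [Finset.card_eq_sum_card_fiberwise (f := fun p : ℕ × ℕ => p.1 * p.2)
      (t := Finset.Icc 1 n) ?hmap]
    case hmap =>
      intro p hp
      simp only [Finset.mem_coe, hT, Finset.mem_filter, Finset.mem_product, Finset.mem_Icc] at hp
      rw [Finset.mem_coe, Finset.mem_Icc]
      exact ⟨Nat.one_le_iff_ne_zero.2 (Nat.mul_ne_zero (by omega) (by omega)), hp.2.1⟩
    apply Finset.sum_congr rfl
    intro i hi
    rw [Finset.mem_Icc] at hi
    rw [← card_coprime_antidiag i (by omega)]
    congr 1
    ext p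
    simp only [Finset.mem_filter, Nat.mem_divisorsAntidiagonal, hT,
      Finset.mem_product, Finset.mem_Icc]
    constructor
    · rintro ⟨⟨hprod, -⟩, hco⟩
      have hi0 : i ≠ 0 := by omega
      have hp1 : p.1 ≠ 0 := left_ne_zero_of_mul (hprod ▸ hi0)
      have hp2 : p.2 ≠ 0 := right_ne_zero_of_mul (hprod ▸ hi0)
      have h1i : p.1 ≤ i := Nat.le_of_dvd (by omega) (Dvd.intro _ hprod)
      have h2i : p.2 ≤ i := Nat.le_of_dvd (by omega) (Dvd.intro_left _ hprod)
      exact ⟨⟨⟨⟨by omega, by omega⟩, by omega, by omega⟩, by omega, hco⟩, hprod⟩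
    · rintro ⟨⟨-, -, hco⟩, hprod⟩
      exact ⟨⟨hprod, by omega⟩, hco⟩
  -- the four parts
  set T1 := T.filter (fun p : ℕ × ℕ => p.1 = 1) with hT1
  set T2 := T.filter (fun p : ℕ × ℕ => p.1 ≠ 1 ∧ p.2 = 1) with hT2
  set T3 := T.filter (fun p : ℕ × ℕ => 1 < p.1 ∧ 1 < p.2 ∧ p.1 < p.2) with hT3
  set T4 := T.filter (fun p : ℕ × ℕ => 1 < p.1 ∧ 1 < p.2 ∧ p.2 < p.1) with hT4
  have hcover : T = T1 ∪ (T2 ∪ (T3 ∪ T4)) := by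
    ext p
    simp only [hT1, hT2, hT3, hT4, Finset.mem_union, Finset.mem_filter]
    constructor
    · intro hp
      have hmem := hp
      simp only [hT, Finset.mem_filter, Finset.mem_product, Finset.mem_Icc] at hmem
      obtain ⟨⟨⟨h11, h12⟩, h21, h22⟩, hle, hco⟩ := hmem
      rcases eq_or_ne p.1 1 with h | h
      · exact Or.inl ⟨hp, h⟩
      rcases eq_or_ne p.2 1 with h2 | h2
      · exact Or.inr (Or.inl ⟨hp, h, h2⟩)
      have hne : p.1 ≠ p.2 := by
        rintro he
        rw [he] at hco
        exact h2 ((Nat.coprime_self _).1 hco)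
      rcases lt_or_gt_of_ne hne with hlt | hgt
      · exact Or.inr (Or.inr (Or.inl ⟨hp, by omega, by omega, hlt⟩))
      · exact Or.inr (Or.inr (Or.inr ⟨hp, by omega, by omega, hgt⟩))
    · rintro (h | h | h | h) <;> exact h.1
  have d3 : Disjoint T3 T4 := by
    rw [Finset.disjoint_left]
    intro p hp hq
    simp only [hT3, hT4, Finset.mem_filter] at hp hq
    omega
  have d2 : Disjoint T2 (T3 ∪ T4) := by
    rw [Finset.disjoint_left]
    intro p hp hq
    simp only [hT2, hT3, hT4, Finset.mem_union, Finset.mem_filter] at hp hq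
    omega
  have d1 : Disjoint T1 (T2 ∪ (T3 ∪ T4)) := by
    rw [Finset.disjoint_left]
    intro p hp hq
    simp only [hT1, hT2, hT3, hT4, Finset.mem_union, Finset.mem_filter] at hp hq
    omega
  have hpart : T.card = T1.card + (T2.card + (T3.card + T4.card)) := by
    rw [hcover, Finset.card_union_of_disjoint d1, Finset.card_union_of_disjoint d2,
      Finset.card_union_of_disjoint d3]
  -- card T1 = n
  have hc1 : T1.card = n := by
    have : T1 = {1} ×ˢ Finset.Icc 1 n := by
      ext p
      simp only [hT1, hT, Finset.mem_filter, Finset.mem_product, Finset.mem_Icc,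
        Finset.mem_singleton]
      constructor
      · rintro ⟨⟨⟨-, h2⟩, -, -⟩, h1⟩
        exact ⟨h1, h2⟩
      · rintro ⟨h1, hb1, hb2⟩
        refine ⟨⟨⟨⟨by omega, by omega⟩, hb1, hb2⟩, by rw [h1, one_mul]; exact hb2, ?_⟩, h1⟩
        rw [h1]
        exact Nat.coprime_one_left _
    rw [this, Finset.card_product, Finset.card_singleton, Nat.card_Icc]
    omega
  -- card T2 = n - 1
  have hc2 : T2.card = n - 1 := by
    have : T2 = Finset.Icc 2 n ×ˢ {1} := by
      ext p
      simp only [hT2, hT, Finset.mem_filter, Finset.mem_product, Finset.mem_Icc,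
        Finset.mem_singleton]
      constructor
      · rintro ⟨⟨⟨⟨ha1, ha2⟩, -⟩, -, -⟩, hne, h1⟩
        exact ⟨⟨by omega, ha2⟩, h1⟩
      · rintro ⟨⟨ha1, ha2⟩, h1⟩
        refine ⟨⟨⟨⟨by omega, ha2⟩, by omega, by omega⟩, by rw [h1, mul_one]; exact ha2, ?_⟩, by omega, h1⟩
        rw [h1]
        exact Nat.coprime_one_right _
    rw [this, Finset.card_product, Finset.card_singleton, Nat.card_Icc]
    omega
  -- card T3 = sum over A
  set c : ℕ → ℕ := fun a => ((Finset.Icc (a + 1) (n / a)).filter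
      (fun b => Nat.Coprime b a)).card with hc
  have hc3 : T3.card = ∑ a ∈ A, c a := by
    rw [Finset.card_eq_sum_card_fiberwise (f := Prod.fst) (t := A) ?hmap3]
    case hmap3 =>
      intro p hp
      simp only [Finset.mem_coe, hT3, hT, Finset.mem_filter, Finset.mem_product, Finset.mem_Icc] at hp
      obtain ⟨⟨⟨⟨h11, h12⟩, h21, h22⟩, hle, hco⟩, ha1, hb1, hab⟩ := hp
      simp only [Finset.mem_coe, hA, Finset.mem_filter, Finset.mem_Icc]
      refine ⟨⟨h11, h12⟩, ha1, ?_⟩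
      calc p.1 ^ 2 = p.1 * p.1 := sq p.1
        _ < p.1 * p.2 := by
            exact Nat.mul_lt_mul_of_le_of_lt (le_refl p.1) hab (by omega)
        _ ≤ n := hle
    apply Finset.sum_congr rfl
    intro a ha
    have hamem := ha
    simp only [hA, Finset.mem_filter, Finset.mem_Icc] at hamem
    obtain ⟨⟨ha1, han⟩, ha2, hasq⟩ := hamem
    have ha0 : 0 < a := by omega
    have hfib : T3.filter (fun p => p.1 = a)
        = {a} ×ˢ ((Finset.Icc (a + 1) (n / a)).filter (fun b => Nat.Coprime b a)) := by
      ext p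
      simp only [hT3, hT, Finset.mem_filter, Finset.mem_product, Finset.mem_Icc,
        Finset.mem_singleton]
      constructor
      · rintro ⟨⟨⟨⟨⟨h11, h12⟩, h21, h22⟩, hle, hco⟩, hx1, hx2, hxy⟩, hfst⟩
        refine ⟨hfst, ⟨⟨by omega, ?_⟩, ?_⟩⟩
        · rw [Nat.le_div_iff_mul_le ha0, mul_comm]
          rw [hfst] at hle
          exact hle
        · rw [← hfst]
          exact hco.symm
      · rintro ⟨hfst, ⟨hb1, hb2⟩, hco⟩
        have hba : a * p.2 ≤ n := by
          rw [mul_comm]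
          exact (Nat.le_div_iff_mul_le ha0).1 hb2
        have hb2n : p.2 ≤ n := le_trans hb2 (Nat.div_le_self n a)
        refine ⟨⟨⟨⟨⟨by omega, by omega⟩, by omega, hb2n⟩, ?_, ?_⟩, by omega, by omega, by omega⟩, hfst⟩
        · rw [hfst]; exact hba
        · rw [hfst]; exact hco.symm
    rw [hfib, Finset.card_product, Finset.card_singleton, one_mul]
  -- card T4 = card T3
  have hc4 : T4.card = T3.card := by
    have himg : T4 = T3.image Prod.swap := by
      ext p
      simp only [Finset.mem_image]
      constructor
      · intro hp
        refine ⟨p.swap, ?_, Prod.swap_swap p⟩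
        simp only [hT4, hT, Finset.mem_filter, Finset.mem_product, Finset.mem_Icc] at hp
        obtain ⟨⟨⟨⟨h11, h12⟩, h21, h22⟩, hle, hco⟩, hx1, hx2, hxy⟩ := hp
        simp only [hT3, hT, Finset.mem_filter, Finset.mem_product, Finset.mem_Icc,
          Prod.fst_swap, Prod.snd_swap]
        exact ⟨⟨⟨⟨h21, h22⟩, h11, h12⟩, by rw [mul_comm]; exact hle, hco.symm⟩,
          hx2, hx1, hxy⟩
      · rintro ⟨q, hq, rfl⟩
        simp only [hT3, hT, Finset.mem_filter, Finset.mem_product, Finset.mem_Icc] at hq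
        obtain ⟨⟨⟨⟨h11, h12⟩, h21, h22⟩, hle, hco⟩, hx1, hx2, hxy⟩ := hq
        simp only [hT4, hT, Finset.mem_filter, Finset.mem_product, Finset.mem_Icc,
          Prod.fst_swap, Prod.snd_swap]
        exact ⟨⟨⟨⟨h21, h22⟩, h11, h12⟩, by rw [mul_comm]; exact hle, hco.symm⟩,
          hx2, hx1, hxy⟩
    rw [himg, Finset.card_image_of_injective _ Prod.swap_injective]
  -- translate the RHS summand
  have hAsum : ∀ a ∈ A, (phi (n / a) a : ℤ) - (a.totient : ℤ) = (c a : ℤ) := by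
    intro a ha
    simp only [hA, Finset.mem_filter, Finset.mem_Icc] at ha
    obtain ⟨⟨ha1, han⟩, ha2, hasq⟩ := ha
    have hadiv : a ≤ n / a := by
      rw [Nat.le_div_iff_mul_le (by omega)]
      nlinarith [sq a]
    rw [phi_split a (n / a) ha2 hadiv]
    push_cast
    ring
  rw [h1, hpart, hc1, hc2, hc3, hc4, hc3,
    Finset.sum_congr rfl hAsum]
  push_cast [Nat.cast_sub hn]
  ring
end
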